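/- In a minimal topological dynamical system (X,α,G) on a compact metric space, a tuple (x_1,...,x_m) belongs to the regionally proximal m-relation Q_m if and only if for every subset B ⊆ X with non-empty interior and all neighbourhoods U_1,...,U_m of x_1,...,x_m, there exists h ∈ G with α(h,B) ∩ U_i ≠ ∅ for every i ∈ {1,...,m}. -/
import Mathlib


open Metric Set Filter Topology

/-- The regionally proximal `m`-relation: the intersection, over all neighbourhoods `V` of the
diagonal in `X^m`, of the closures of the orbit of `V` under the diagonal action. -/
noncomputable def Qm {G X : Type*} [Group G] [TopologicalSpace X] [MulAction G X]
    (m : ℕ) : Set (Fin m → X) :=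
  ⋂ V ∈ 𝓝ˢ {x : Fin m → X | ∀ i j : Fin m, x i = x j},
    closure (⋃ g : G, (fun (x : Fin m → X) (i : Fin m) => g • x i) '' V)

theorem mem_Qm_iff_sensitivity
    {G X : Type*} [Group G] [MetricSpace X] [CompactSpace X] [MulAction G X]
    (hcont : ∀ g : G, Continuous fun x : X => g • x)
    (hmin : ∀ x : X, Dense (MulAction.orbit G x))
    (m : ℕ) (hm : 1 ≤ m) (x : Fin m → X) :
    x ∈ Qm (G := G) m ↔
      ∀ B : Set X, (interior B).Nonempty →
        ∀ U : Fin m → Set X, (∀ i, U i ∈ 𝓝 (x i)) →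
          ∃ h : G, ∀ i, ∃ b ∈ B, h • b ∈ U i := by
  have i0 : Fin m := ⟨0, hm⟩
  constructor
  · intro hx B hB U hU
    obtain ⟨p0, hp0⟩ := hB
    -- cover X by preimages of the interior of B
    have hcov : (univ : Set X) ⊆ ⋃ g : G, (fun z : X => g • z) ⁻¹' interior B := by
      intro z _
      obtain ⟨w, hwO, g, rfl⟩ :=
        (hmin z).inter_open_nonempty (interior B) isOpen_interior ⟨p0, hp0⟩
      exact mem_iUnion.2 ⟨g, hwO⟩
    obtain ⟨s, hs⟩ := isCompact_univ.elim_finite_subcover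
      (fun g : G => (fun z : X => g • z) ⁻¹' interior B)
      (fun g => isOpen_interior.preimage (hcont g)) hcov
    set V : Set (Fin m → X) := ⋃ g ∈ s, {y : Fin m → X | ∀ i, g • y i ∈ interior B} with hVdef
    have hV : V ∈ 𝓝ˢ {x : Fin m → X | ∀ i j : Fin m, x i = x j} := by
      rw [mem_nhdsSet_iff_forall]
      intro z hz
      have hzmem : z i0 ∈ ⋃ g ∈ s, (fun w : X => g • w) ⁻¹' interior B := hs (mem_univ _)
      obtain ⟨g, hgs, hgz⟩ := mem_iUnion₂.1 hzmem
      have hopen : IsOpen {y : Fin m → X | ∀ i, g • y i ∈ interior B} := by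
        have : {y : Fin m → X | ∀ i, g • y i ∈ interior B} =
            ⋂ i, (fun y : Fin m → X => y i) ⁻¹' ((fun w : X => g • w) ⁻¹' interior B) := by
          ext y; simp
        rw [this]
        exact isOpen_iInter_of_finite fun i =>
          ((isOpen_interior.preimage (hcont g)).preimage (continuous_apply i))
      refine Filter.mem_of_superset (hopen.mem_nhds ?_) ?_
      · intro i
        have : z i = z i0 := hz i i0
        rw [this]; exact hgz
      · exact subset_iUnion₂ (s := fun g _ => {y : Fin m → X | ∀ i, g • y i ∈ interior B}) g hgs
    have hclo : x ∈ closure (⋃ g : G, (fun (y : Fin m → X) (i : Fin m) => g • y i) '' V) :=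
      Set.mem_iInter₂.1 hx V hV
    have hUmem : univ.pi U ∈ 𝓝 x := set_pi_mem_nhds finite_univ (fun i _ => hU i)
    obtain ⟨t, htU, htG⟩ := mem_closure_iff_nhds.1 hclo _ hUmem
    simp only [mem_iUnion, mem_image] at htG
    obtain ⟨g, y, hyV, rfl⟩ := htG
    obtain ⟨k, hks, hk⟩ := mem_iUnion₂.1 hyV
    refine ⟨g * k⁻¹, fun i => ⟨k • y i, interior_subset (hk i), ?_⟩⟩
    have : (g * k⁻¹) • k • y i = g • y i := by
      rw [mul_smul, inv_smul_smul]
    rw [this]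
    exact htU i (mem_univ i)
  · intro H
    refine Set.mem_iInter₂.2 fun V hV => ?_
    rw [mem_closure_iff_nhds]
    intro t ht
    rw [nhds_pi, Filter.mem_pi] at ht
    obtain ⟨I, hIfin, U, hU, hUt⟩ := ht
    have hVc : V ∈ 𝓝 (fun _ : Fin m => x i0) :=
      mem_nhdsSet_iff_forall.1 hV _ (fun _ _ => rfl)
    rw [nhds_pi, Filter.mem_pi] at hVc
    obtain ⟨J, hJfin, W, hW, hWV⟩ := hVc
    set B : Set X := ⋂ i, W i with hBdef
    have hBnhds : B ∈ 𝓝 (x i0) := Filter.iInter_mem.2 hW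
    have hBint : (interior B).Nonempty := ⟨x i0, mem_interior_iff_mem_nhds.2 hBnhds⟩
    obtain ⟨h, hh⟩ := H B hBint U hU
    choose b hbB hbU using hh
    refine ⟨fun i => h • b i, ?_, ?_⟩
    · apply hUt
      intro i _
      exact hbU i
    · refine mem_iUnion.2 ⟨h, b, ?_, rfl⟩
      apply hWV
      intro i _
      exact mem_iInter.1 (hbB i) i
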